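/- For a finite Borel measure μ on ℝ with compact support, the following are equivalent: (1) μ fails the Steinhaus property; (2) there is a compact set A with μ(A) > 0 and m(A) = 0; (3) there is a compact set A with μ(A) > 0 and a sequence of nonzero reals tₙ → 0 with μ(A + tₙ) → 0. -/

import Mathlib

open MeasureTheory Set Pointwise Filter
open scoped ENNReal

def HasSP (μ : Measure ℝ) : Prop :=
  ∀ A : Set ℝ, MeasurableSet A → 0 < μ A → ∃ ε > 0, Set.Ioo (-ε) ε ⊆ A - A

/-- Steinhaus theorem for Lebesgue measure, in interval form. -/
lemma steinhaus_volume {A : Set ℝ} (hA : MeasurableSet A) (hpos : 0 < volume A) :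
    ∃ ε > 0, Set.Ioo (-ε) ε ⊆ A - A := by
  have h := MeasureTheory.Measure.sub_mem_nhds_zero_of_addHaar_pos volume A hA hpos
  rcases Metric.mem_nhds_iff.1 h with ⟨ε, hε, hsub⟩
  refine ⟨ε, hε, fun x hx => hsub ?_⟩
  rw [Real.ball_eq_Ioo]
  simpa using hx

/-- From failure of SP, get a compact set of positive μ-measure and zero volume. -/
lemma notSP_imp_compact (μ : Measure ℝ) [IsFiniteMeasure μ] (h : ¬ HasSP μ) :
    ∃ A : Set ℝ, IsCompact A ∧ 0 < μ A ∧ volume A = 0 := by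
  rw [HasSP] at h
  push_neg at h
  obtain ⟨A, hA, hpos, hne⟩ := h
  have hvol : volume A = 0 := by
    by_contra hv
    have : 0 < volume A := pos_iff_ne_zero.2 hv
    obtain ⟨ε, hε, hsub⟩ := steinhaus_volume hA this
    exact hne ε hε hsub
  obtain ⟨L, hLA, hLc, hLpos⟩ := MeasurableSet.exists_lt_isCompact hA hpos
  exact ⟨L, hLc, hLpos, le_antisymm (le_trans (measure_mono hLA) hvol.le) zero_le⟩

/-- From a compact null set of positive measure, produce translates of measure zero. -/
lemma compact_imp_translates (μ : Measure ℝ) [IsFiniteMeasure μ]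
    {A : Set ℝ} (hAc : IsCompact A) (hpos : 0 < μ A) (hvol : volume A = 0) :
    ∃ t : ℕ → ℝ, (∀ n, t n ≠ 0) ∧ Tendsto t atTop (nhds 0) ∧
      ∀ n, μ ((fun a => a + t n) '' A) = 0 := by
  have hA : MeasurableSet A := hAc.measurableSet
  set f : ℝ → ℝ → ℝ≥0∞ := fun x t => A.indicator 1 (x - t) with hf
  have hfm : Measurable (Function.uncurry f) := by
    have : Function.uncurry f = (A.indicator (1 : ℝ → ℝ≥0∞)) ∘ (fun p : ℝ × ℝ => p.1 - p.2) := rfl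
    rw [this]
    exact (measurable_one.indicator hA).comp (measurable_fst.sub measurable_snd)
  -- the function t ↦ μ (A + t)
  set g : ℝ → ℝ≥0∞ := fun t => ∫⁻ x, f x t ∂μ with hg
  have hgm : Measurable g := Measurable.lintegral_prod_left hfm
  have key : ∀ x t : ℝ, f x t = ((fun y => y - t) ⁻¹' A).indicator 1 x := by
    intro x t
    by_cases h : x - t ∈ A
    · rw [show f x t = A.indicator 1 (x - t) from rfl, Set.indicator_of_mem h,
        Set.indicator_of_mem (by simpa using h)]
      rfl
    · rw [show f x t = A.indicator 1 (x - t) from rfl, Set.indicator_of_notMem h,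
        Set.indicator_of_notMem (by simpa using h)]
  have hgval : ∀ t, g t = μ ((fun a => a + t) '' A) := by
    intro t
    have himg : (fun a => a + t) '' A = (fun y => y - t) ⁻¹' A := by
      ext x
      constructor
      · rintro ⟨a, ha, rfl⟩; simpa using ha
      · intro hx; exact ⟨x - t, hx, by ring⟩
    have hpre : MeasurableSet ((fun y => y - t) ⁻¹' A) :=
      hA.preimage (measurable_id.sub measurable_const : Measurable fun y : ℝ => y - t)
    rw [hg, himg]
    simp only [key]
    rw [lintegral_indicator hpre]
    simp
  have hint : ∫⁻ t, g t ∂volume = 0 := by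
    have swap : ∫⁻ t, ∫⁻ x, f x t ∂μ ∂volume = ∫⁻ x, ∫⁻ t, f x t ∂volume ∂μ :=
      (lintegral_lintegral_swap hfm.aemeasurable).symm
    have inner : ∀ x : ℝ, ∫⁻ t, f x t ∂volume = 0 := by
      intro x
      have hpre : MeasurableSet ((fun t => x - t) ⁻¹' A) :=
        hA.preimage (measurable_const.sub measurable_id : Measurable fun t : ℝ => x - t)
      have : ∀ t, f x t = ((fun t => x - t) ⁻¹' A).indicator 1 t := by
        intro t
        by_cases h : x - t ∈ A
        · rw [show f x t = A.indicator 1 (x - t) from rfl, Set.indicator_of_mem h,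
            Set.indicator_of_mem (by simpa using h)]
          rfl
        · rw [show f x t = A.indicator 1 (x - t) from rfl, Set.indicator_of_notMem h,
            Set.indicator_of_notMem (by simpa using h)]
      simp only [this]
      rw [lintegral_indicator hpre]
      simp only [Pi.one_apply, lintegral_one, Measure.restrict_apply MeasurableSet.univ,
        Set.univ_inter]
      rw [(Measure.measurePreserving_sub_left volume x).measure_preimage hA.nullMeasurableSet]
      exact hvol
    calc ∫⁻ t, g t ∂volume = ∫⁻ x, ∫⁻ t, f x t ∂volume ∂μ := swap
      _ = ∫⁻ x, (0 : ℝ≥0∞) ∂μ := by simp only [inner]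
      _ = 0 := lintegral_zero
  have hae : ∀ᵐ t ∂volume, g t = 0 := (lintegral_eq_zero_iff hgm).1 hint
  -- choose tₙ in (0, 1/(n+1)) with g tₙ = 0
  have hex : ∀ n : ℕ, ∃ t : ℝ, t ∈ Set.Ioo (0 : ℝ) (1 / (n + 1)) ∧ g t = 0 := by
    intro n
    by_contra hcon
    push_neg at hcon
    have hsub : Set.Ioo (0 : ℝ) (1 / (n + 1)) ⊆ {t | ¬ g t = 0} := fun t ht => hcon t ht
    have h0 : volume (Set.Ioo (0 : ℝ) (1 / (n + 1))) = 0 :=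
      measure_mono_null hsub hae
    rw [Real.volume_Ioo] at h0
    have : (0 : ℝ) < 1 / (n + 1) := by positivity
    simp [ENNReal.ofReal_eq_zero, this] at h0
    linarith
  choose t ht hgt using hex
  refine ⟨t, fun n => (ht n).1.ne', ?_, fun n => by rw [← hgval]; exact hgt n⟩
  have h1 : Tendsto (fun n : ℕ => 1 / ((n : ℝ) + 1)) atTop (nhds 0) :=
    tendsto_one_div_add_atTop_nhds_zero_nat
  exact tendsto_of_tendsto_of_tendsto_of_le_of_le tendsto_const_nhds h1
    (fun n => (ht n).1.le) (fun n => (ht n).2.le)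

/-- Mospan construction: translates with small measure imply failure of SP. -/
lemma translates_imp_notSP (μ : Measure ℝ) [IsFiniteMeasure μ]
    {A : Set ℝ} (hAc : IsCompact A) (hpos : 0 < μ A)
    {t : ℕ → ℝ} (htne : ∀ n, t n ≠ 0) (htlim : Tendsto t atTop (nhds 0))
    (hμlim : Tendsto (fun n => μ ((fun a => a + t n) '' A)) atTop (nhds 0)) :
    ¬ HasSP μ := by
  have hA : MeasurableSet A := hAc.measurableSet
  set c := μ A with hc
  have hcne : c ≠ ∞ := measure_ne_top μ A
  have hc0 : c ≠ 0 := hpos.ne'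
  -- choose a subsequence with summable small measures
  have hsel : ∀ k : ℕ, ∃ n : ℕ, k ≤ n ∧
      μ ((fun a => a + t n) '' A) ≤ c * (2 : ℝ≥0∞)⁻¹ ^ (k + 2) := by
    intro k
    have hεpos : (0 : ℝ≥0∞) < c * (2 : ℝ≥0∞)⁻¹ ^ (k + 2) := by
      apply ENNReal.mul_pos hc0
      simp [pow_ne_zero]
    have h1 : ∀ᶠ n in atTop, μ ((fun a => a + t n) '' A) < c * (2 : ℝ≥0∞)⁻¹ ^ (k + 2) :=
      hμlim.eventually_lt_const hεpos
    have h2 : ∀ᶠ n in atTop, k ≤ n := eventually_ge_atTop k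
    obtain ⟨n, hn1, hn2⟩ := (h2.and h1).exists
    exact ⟨n, hn1, hn2.le⟩
  choose s hs hμs using hsel
  -- the bad set
  set U : Set ℝ := ⋃ k, (fun a => a + t (s k)) '' A with hU
  have himg : ∀ r : ℝ, (fun a => a + r) '' A = (fun y => y - r) ⁻¹' A := by
    intro r
    ext x
    constructor
    · rintro ⟨a, ha, rfl⟩; simpa using ha
    · intro hx; exact ⟨x - r, hx, by ring⟩
  have hUm : MeasurableSet U := by
    apply MeasurableSet.iUnion
    intro k
    rw [himg]
    exact hA.preimage (measurable_id.sub measurable_const)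
  set B := A \ U with hB
  have hBm : MeasurableSet B := hA.diff hUm
  have hUμ : μ U ≤ c / 2 := by
    calc μ U ≤ ∑' k, μ ((fun a => a + t (s k)) '' A) := measure_iUnion_le _
      _ ≤ ∑' k : ℕ, c * (2 : ℝ≥0∞)⁻¹ ^ (k + 2) := ENNReal.tsum_le_tsum hμs
      _ = c * 2⁻¹ := by
          have hgeo : ∑' k : ℕ, ((2 : ℝ≥0∞)⁻¹) ^ (k + 2) = 2⁻¹ := by
            have hrw : ∀ k : ℕ, ((2 : ℝ≥0∞)⁻¹) ^ (k + 2) = ((2 : ℝ≥0∞)⁻¹) ^ k * (2⁻¹) ^ 2 :=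
              fun k => by rw [pow_add]
            rw [tsum_congr hrw, ENNReal.tsum_mul_right, ENNReal.tsum_geometric,
              ENNReal.one_sub_inv_two, inv_inv, sq, ← mul_assoc,
              ENNReal.mul_inv_cancel (by norm_num) (by norm_num), one_mul]
          rw [ENNReal.tsum_mul_left, hgeo]
      _ = c / 2 := by rw [ENNReal.div_eq_inv_mul, mul_comm]
  have hBpos : 0 < μ B := by
    by_contra hcon
    push_neg at hcon
    have hB0 : μ B = 0 := le_antisymm hcon zero_le
    have : c ≤ c / 2 := by
      calc c = μ A := rfl
        _ ≤ μ (B ∪ U) := measure_mono (fun x hx => by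
            by_cases hxU : x ∈ U
            · exact Or.inr hxU
            · exact Or.inl ⟨hx, hxU⟩)
        _ ≤ μ B + μ U := measure_union_le _ _
        _ = μ U := by rw [hB0, zero_add]
        _ ≤ c / 2 := hUμ
    exact absurd this (not_le.2 (ENNReal.half_lt_self hc0 hcne))
  -- each t (s k) is not in B - B
  have hnotin : ∀ k, t (s k) ∉ B - B := by
    intro k hk
    rw [Set.mem_sub] at hk
    obtain ⟨x, hx, y, hy, hxy⟩ := hk
    have hxU : x ∈ U := by
      apply Set.mem_iUnion.2 ⟨k, ?_⟩
      exact ⟨y, hy.1, show y + t (s k) = x by linarith⟩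
    exact hx.2 hxU
  -- t (s k) → 0
  have hslim : Tendsto (fun k => t (s k)) atTop (nhds 0) :=
    htlim.comp (tendsto_atTop_mono hs tendsto_id)
  intro hSP
  obtain ⟨ε, hε, hsub⟩ := hSP B hBm hBpos
  have : ∀ᶠ k in atTop, t (s k) ∈ Set.Ioo (-ε) ε := by
    have := Metric.tendsto_nhds.1 hslim ε hε
    filter_upwards [this] with k hk
    rw [Real.dist_eq, sub_zero] at hk
    exact ⟨neg_lt_of_abs_lt hk, lt_of_abs_lt hk⟩
  obtain ⟨k, hk⟩ := this.exists
  exact hnotin k (hsub hk)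

theorem not_SP_tfae (μ : Measure ℝ) [IsFiniteMeasure μ]
    (K : Set ℝ) (hK : IsCompact K) (hsupp : μ Kᶜ = 0) :
    ((¬ HasSP μ) ↔ ∃ A : Set ℝ, IsCompact A ∧ 0 < μ A ∧ volume A = 0) ∧
    ((¬ HasSP μ) ↔ ∃ A : Set ℝ, IsCompact A ∧ 0 < μ A ∧
        ∃ t : ℕ → ℝ, (∀ n, t n ≠ 0) ∧ Tendsto t atTop (nhds 0) ∧
          Tendsto (fun n => μ ((fun a => a + t n) '' A)) atTop (nhds 0)) := by
  have h12 : (¬ HasSP μ) → ∃ A : Set ℝ, IsCompact A ∧ 0 < μ A ∧ volume A = 0 :=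
    notSP_imp_compact μ
  have h23 : (∃ A : Set ℝ, IsCompact A ∧ 0 < μ A ∧ volume A = 0) →
      ∃ A : Set ℝ, IsCompact A ∧ 0 < μ A ∧
        ∃ t : ℕ → ℝ, (∀ n, t n ≠ 0) ∧ Tendsto t atTop (nhds 0) ∧
          Tendsto (fun n => μ ((fun a => a + t n) '' A)) atTop (nhds 0) := by
    rintro ⟨A, hAc, hpos, hvol⟩
    obtain ⟨t, htne, htlim, hμt⟩ := compact_imp_translates μ hAc hpos hvol
    refine ⟨A, hAc, hpos, t, htne, htlim, ?_⟩
    have hfun : (fun n => μ ((fun a => a + t n) '' A)) = fun _ => (0 : ℝ≥0∞) :=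
      funext fun n => hμt n
    rw [hfun]
    exact tendsto_const_nhds
  have h31 : (∃ A : Set ℝ, IsCompact A ∧ 0 < μ A ∧
      ∃ t : ℕ → ℝ, (∀ n, t n ≠ 0) ∧ Tendsto t atTop (nhds 0) ∧
        Tendsto (fun n => μ ((fun a => a + t n) '' A)) atTop (nhds 0)) → ¬ HasSP μ := by
    rintro ⟨A, hAc, hpos, t, htne, htlim, hμlim⟩
    exact translates_imp_notSP μ hAc hpos htne htlim hμlim
  exact ⟨⟨h12, fun h => h31 (h23 h)⟩, ⟨fun h => h23 (h12 h), h31⟩⟩
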